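/- arXiv:1408.6024 — 4 statements merged into one kernel-verified Lean document; each statement's English description precedes it below -/
import Mathlib

section
/- Let L > 0 and δ > 0. Define h(t) = g(t) + g(-t) on [-1,1], where g(t) = (1+t)·ln(1+t) − (1/L)·(L(1+t) + δ)·ln(L(1+t) + δ). Then h'(t) > 0 for all t ∈ (0,1), h is even, and h attains its minimum on [-1,1] at t = 0. -/
open Real

lemma hasDerivAt_g_aux (L δ : ℝ) (hL : 0 < L) (hδ : 0 < δ) (t : ℝ) (ht : 0 < 1 + t) :
    HasDerivAt (fun t : ℝ =>
      (1 + t) * Real.log (1 + t) - (1 / L) * (L * (1 + t) + δ) * Real.log (L * (1 + t) + δ))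
      (Real.log (1 + t) - Real.log (L * (1 + t) + δ)) t := by
  have hv : 0 < L * (1 + t) + δ := by positivity
  have h1 : HasDerivAt (fun t : ℝ => 1 + t) 1 t := (hasDerivAt_id t).const_add 1
  have hlog1 : HasDerivAt (fun t : ℝ => Real.log (1 + t)) (1 / (1 + t)) t := by
    simpa using h1.log ht.ne'
  have hA : HasDerivAt (fun t : ℝ => (1 + t) * Real.log (1 + t))
      (1 * Real.log (1 + t) + (1 + t) * (1 / (1 + t))) t := h1.mul hlog1
  have h2 : HasDerivAt (fun t : ℝ => L * (1 + t) + δ) L t := by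
    simpa using ((h1.const_mul L).add_const δ)
  have hlog2 : HasDerivAt (fun t : ℝ => Real.log (L * (1 + t) + δ))
      ((L * (1 + t) + δ)⁻¹ * L) t := by
    convert h2.log hv.ne' using 1; ring
  have hB : HasDerivAt (fun t : ℝ => (1 / L) * (L * (1 + t) + δ) * Real.log (L * (1 + t) + δ))
      ((1 / L) * (L * Real.log (L * (1 + t) + δ) +
        (L * (1 + t) + δ) * ((L * (1 + t) + δ)⁻¹ * L))) t := by
    have := (h2.mul hlog2).const_mul (1 / L)
    exact (this.congr_deriv (by ring)).congr_of_eventuallyEq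
      (Filter.Eventually.of_forall fun s => by simp only [Pi.mul_apply]; ring)
  have := hA.sub hB
  refine this.congr_deriv ?_
  field_simp
  ring

theorem h_deriv_pos_even_min (L δ : ℝ) (hL : 0 < L) (hδ : 0 < δ) :
    let g : ℝ → ℝ := fun t =>
      (1 + t) * Real.log (1 + t) - (1 / L) * (L * (1 + t) + δ) * Real.log (L * (1 + t) + δ)
    let h : ℝ → ℝ := fun t => g t + g (-t)
    (∀ t ∈ Set.Ioo (0:ℝ) 1, 0 < deriv h t) ∧
    (∀ t : ℝ, h (-t) = h t) ∧
    (∀ t ∈ Set.Icc (-1:ℝ) 1, h 0 ≤ h t) := by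
  intro g h
  -- derivative computation on (-1,1)
  have hderiv : ∀ t ∈ Set.Ioo (-1:ℝ) 1,
      HasDerivAt h ((Real.log (1 + t) - Real.log (L * (1 + t) + δ))
        - (Real.log (1 - t) - Real.log (L * (1 - t) + δ))) t := by
    intro t ht
    have ht1 : 0 < 1 + t := by linarith [ht.1]
    have ht2 : 0 < 1 + -t := by linarith [ht.2]
    have hg1 := hasDerivAt_g_aux L δ hL hδ t ht1
    have hg2 := (hasDerivAt_g_aux L δ hL hδ (-t) ht2).comp t (hasDerivAt_neg t)
    have := hg1.add hg2
    refine this.congr_deriv ?_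
    have e1 : 1 - t = 1 + -t := by ring
    rw [e1]
    ring
  have hdpos : ∀ t ∈ Set.Ioo (0:ℝ) 1, 0 < deriv h t := by
    intro t ht
    have ht' : t ∈ Set.Ioo (-1:ℝ) 1 := ⟨by linarith [ht.1], ht.2⟩
    rw [(hderiv t ht').deriv]
    have h1 : 0 < 1 + t := by linarith [ht.1]
    have h2 : 0 < 1 - t := by linarith [ht.2]
    have hv1 : 0 < L * (1 + t) + δ := by positivity
    have hv2 : 0 < L * (1 - t) + δ := by positivity
    have key : (1 - t) * (L * (1 + t) + δ) < (1 + t) * (L * (1 - t) + δ) := by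
      nlinarith [ht.1, hδ]
    have hlog : Real.log ((1 - t) * (L * (1 + t) + δ)) <
        Real.log ((1 + t) * (L * (1 - t) + δ)) :=
      Real.log_lt_log (by positivity) key
    rw [Real.log_mul h2.ne' hv1.ne', Real.log_mul h1.ne' hv2.ne'] at hlog
    linarith
  have heven : ∀ t : ℝ, h (-t) = h t := by
    intro t; simp only [h, neg_neg]; ring
  refine ⟨hdpos, heven, ?_⟩
  -- continuity of h
  have hgc : Continuous g := by
    have hf : Continuous fun x : ℝ => x * Real.log x := Real.continuous_mul_log
    have : g = fun t => (1 + t) * Real.log (1 + t) -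
        (1 / L) * ((L * (1 + t) + δ) * Real.log (L * (1 + t) + δ)) := by
      funext t; simp only [g]; ring
    rw [this]
    exact (hf.comp (continuous_const.add continuous_id)).sub
      (continuous_const.mul (hf.comp ((continuous_const.mul
        (continuous_const.add continuous_id)).add continuous_const)))
  have hhc : Continuous h := (hgc.add (hgc.comp continuous_neg))
  have hmono : StrictMonoOn h (Set.Icc 0 1) := by
    apply strictMonoOn_of_deriv_pos (convex_Icc 0 1) hhc.continuousOn
    intro x hx
    rw [interior_Icc] at hx
    exact hdpos x hx
  intro t ht
  rcases le_or_gt 0 t with h0 | h0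
  · exact hmono.monotoneOn (Set.mem_Icc.2 ⟨le_refl 0, zero_le_one⟩)
      (Set.mem_Icc.2 ⟨h0, ht.2⟩) h0
  · rw [← heven t]
    exact hmono.monotoneOn (Set.mem_Icc.2 ⟨le_refl 0, zero_le_one⟩)
      (Set.mem_Icc.2 ⟨by linarith, by linarith [ht.1]⟩) (by linarith)
end

section
/- Let c > 1 and set a = (c² + 1)/(2c). For x ∈ [−1/a, 1/a], the distance from the point (x, 0) to the boundary ellipse {(u,v) : u²/a² + v²/(a²−1) = 1} equals √(a² − 1)·√(1 − x²). -/
theorem dist_to_ellipse_boundary (c : ℝ) (hc : 1 < c) (x : ℝ)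
    (hx : x ∈ Set.Icc (-(1 / ((c ^ 2 + 1) / (2 * c)))) (1 / ((c ^ 2 + 1) / (2 * c)))) :
    let a := (c ^ 2 + 1) / (2 * c)
    Metric.infDist (x : ℂ)
        {z : ℂ | z.re ^ 2 / a ^ 2 + z.im ^ 2 / (a ^ 2 - 1) = 1}
      = Real.sqrt (a ^ 2 - 1) * Real.sqrt (1 - x ^ 2) := by
  intro a
  have hc0 : (0:ℝ) < c := lt_trans one_pos hc
  have ha1 : 1 < a := by
    rw [lt_div_iff₀ (by positivity)]
    nlinarith [sq_nonneg (c - 1)]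
  have ha0 : 0 < a := lt_trans one_pos ha1
  have hb2 : 0 < a ^ 2 - 1 := by nlinarith
  -- bounds on x
  have hxl : -(1/a) ≤ x := hx.1
  have hxr : x ≤ 1/a := hx.2
  clear_value a
  clear hx
  have hax : a ^ 2 * x ^ 2 ≤ 1 := by
    have h1 : x ^ 2 ≤ (1/a) ^ 2 := sq_le_sq' hxl hxr
    calc a ^ 2 * x ^ 2 ≤ a ^ 2 * (1/a) ^ 2 := by nlinarith
      _ = 1 := by field_simp
  have hx2 : x ^ 2 ≤ 1 := by nlinarith
  set S : Set ℂ := {z : ℂ | z.re ^ 2 / a ^ 2 + z.im ^ 2 / (a ^ 2 - 1) = 1} with hS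
  set z₀ : ℂ := ⟨a ^ 2 * x, Real.sqrt ((a ^ 2 - 1) * (1 - a ^ 2 * x ^ 2))⟩ with hz₀
  have hz₀S : z₀ ∈ S := by
    simp only [hS, Set.mem_setOf_eq, hz₀]
    rw [Real.sq_sqrt (by nlinarith)]
    field_simp
    ring
  have hne : S.Nonempty := ⟨z₀, hz₀S⟩
  have hgoal : Real.sqrt (a ^ 2 - 1) * Real.sqrt (1 - x ^ 2)
      = Real.sqrt ((a ^ 2 - 1) * (1 - x ^ 2)) := by
    rw [Real.sqrt_mul hb2.le]
  apply le_antisymm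
  · calc Metric.infDist (x : ℂ) S ≤ dist (x : ℂ) z₀ := Metric.infDist_le_dist_of_mem hz₀S
      _ = Real.sqrt (a ^ 2 - 1) * Real.sqrt (1 - x ^ 2) := by
        rw [Complex.dist_eq_re_im, hgoal]
        congr 1
        simp only [hz₀, Complex.ofReal_re, Complex.ofReal_im]
        have hW : (0 - Real.sqrt ((a ^ 2 - 1) * (1 - a ^ 2 * x ^ 2))) ^ 2
            = (a ^ 2 - 1) * (1 - a ^ 2 * x ^ 2) := by
          rw [zero_sub, neg_sq, Real.sq_sqrt (by nlinarith)]
        rw [hW]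
        ring
  · rw [hgoal]
    by_contra hcon
    push_neg at hcon
    obtain ⟨z, hz, hlt⟩ := (Metric.infDist_lt_iff hne).mp hcon
    simp only [hS, Set.mem_setOf_eq] at hz
    apply absurd hlt
    push_neg
    rw [Complex.dist_eq_re_im]
    apply Real.sqrt_le_sqrt
    simp only [Complex.ofReal_re, Complex.ofReal_im]
    ring_nf
    have hv : z.im ^ 2 * a ^ 2 + z.re ^ 2 * (a ^ 2 - 1) = a ^ 2 * (a ^ 2 - 1) := by
      have := hz
      field_simp at this
      linarith
    nlinarith [sq_nonneg (z.re - a ^ 2 * x)]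
end

section
/- Let N be a positive integer and δ > 0. Let x₁,…,xₙ ∈ [−1,1] with n ≤ N and positive integers k₁,…,kₙ with k₁+…+kₙ = N, and set r_j = r(k_j) (least even integer ≥ k_j), so ∑ r_j ≤ 2N. Then, with L = 1/2, ∫_{−1}^{1} ∏_{j=1}^{n} (L|x − x_j|/(δ + L|x − x_j|))^{r_j} dx ≥ 2·((1 + 1/(2δ))^{2δ}·(2δ + 1))^{−2N}. -/
open intervalIntegral

namespace KeyAux

open Real MeasureTheory Set Filter

noncomputable def ψ (c u : ℝ) : ℝ := Real.log |u| - Real.log (c + |u|)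

lemma intervalIntegrable_log_abs (a b : ℝ) :
    IntervalIntegrable (fun u : ℝ => Real.log |u|) volume a b := by
  suffices h : ∀ d : ℝ, 0 ≤ d → IntervalIntegrable (fun u : ℝ => Real.log |u|) volume 0 d by
    have key : ∀ d : ℝ, IntervalIntegrable (fun u : ℝ => Real.log |u|) volume 0 d := by
      intro d
      rcases le_or_gt 0 d with hd | hd
      · exact h d hd
      · have h2 := ((IntervalIntegrable.iff_comp_neg).mp (h (-d) (by linarith)))
        simp only [abs_neg, neg_neg, neg_zero] at h2
        exact h2
    exact (key a).symm.trans (key b)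
  intro d hd
  have h1 : IntervalIntegrable (fun u : ℝ => 2 * u ^ (-(1/2) : ℝ) + u) volume 0 d :=
    ((intervalIntegrable_rpow' (by norm_num)).const_mul 2).add
      (continuous_id.intervalIntegrable 0 d)
  apply h1.mono_fun' ((Real.measurable_log.comp measurable_abs).aestronglyMeasurable)
  filter_upwards [ae_restrict_mem measurableSet_uIoc] with u hu
  rw [Set.uIoc_of_le hd] at hu
  have hu0 : 0 < u := hu.1
  simp only [Function.comp_apply, Real.norm_eq_abs, abs_of_pos hu0]
  have hr : (0:ℝ) < u ^ (-(1/2) : ℝ) := Real.rpow_pos_of_pos hu0 _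
  rcases le_or_gt u 1 with h1u | h1u
  · have hlog : Real.log u ≤ 0 := Real.log_nonpos hu0.le h1u
    rw [abs_of_nonpos hlog]
    have h2 := Real.log_le_sub_one_of_pos hr
    rw [Real.log_rpow hu0] at h2
    linarith
  · have hlog : 0 ≤ Real.log u := Real.log_nonneg h1u.le
    rw [abs_of_nonneg hlog]
    have h2 := Real.log_le_sub_one_of_pos hu0
    linarith

lemma psi_intble {c : ℝ} (hc : 0 < c) (a b : ℝ) : IntervalIntegrable (ψ c) volume a b := by
  apply (intervalIntegrable_log_abs a b).sub
  apply Continuous.intervalIntegrable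
  exact Continuous.log (continuous_const.add continuous_abs) (fun u => by positivity)

lemma psi_mono {c : ℝ} (hc : 0 < c) {u v : ℝ} (hu : 0 < u) (huv : u ≤ v) : ψ c u ≤ ψ c v := by
  have hv : 0 < v := lt_of_lt_of_le hu huv
  unfold ψ
  rw [abs_of_pos hu, abs_of_pos hv]
  have h1 : Real.log (u * (c + v)) ≤ Real.log (v * (c + u)) := by
    apply Real.log_le_log (by positivity)
    nlinarith
  rw [Real.log_mul (ne_of_gt hu) (by positivity),
    Real.log_mul (ne_of_gt hv) (by positivity)] at h1
  linarith

lemma psi_even (c u : ℝ) : ψ c (-u) = ψ c u := by simp [ψ, abs_neg]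

lemma integral_shift {c : ℝ} (hc : 0 < c) (a : ℝ) :
    (∫ t in (-1:ℝ)..1, ψ c (t - a))
      = (∫ u in (0:ℝ)..(1+a), ψ c u) + ∫ u in (0:ℝ)..(1-a), ψ c u := by
  rw [intervalIntegral.integral_comp_sub_right (fun t => ψ c t) a]
  have h1 : (∫ u in (0:ℝ)..(1+a), ψ c u) = ∫ u in (-1-a : ℝ)..0, ψ c u := by
    have h2 : (∫ u in (0:ℝ)..(1+a), ψ c u) = ∫ u in (0:ℝ)..(1+a), ψ c (-u) := by
      simp [psi_even]
    rw [h2, intervalIntegral.integral_comp_neg (fun u => ψ c u)]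
    congr 1 <;> ring
  rw [h1, intervalIntegral.integral_add_adjacent_intervals
    (psi_intble hc _ _) (psi_intble hc _ _)]

lemma convex_ineq_aux {c : ℝ} (hc : 0 < c) {a : ℝ} (h0 : 0 ≤ a) (h1 : a ≤ 1) :
    2 * (∫ u in (0:ℝ)..1, ψ c u)
      ≤ (∫ u in (0:ℝ)..(1+a), ψ c u) + ∫ u in (0:ℝ)..(1-a), ψ c u := by
  have e1 : (∫ u in (0:ℝ)..1, ψ c u) + (∫ u in (1:ℝ)..(1+a), ψ c u)
      = ∫ u in (0:ℝ)..(1+a), ψ c u :=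
    intervalIntegral.integral_add_adjacent_intervals (psi_intble hc _ _) (psi_intble hc _ _)
  have e2 : (∫ u in (0:ℝ)..(1-a), ψ c u) + (∫ u in (1-a:ℝ)..1, ψ c u)
      = ∫ u in (0:ℝ)..1, ψ c u :=
    intervalIntegral.integral_add_adjacent_intervals (psi_intble hc _ _) (psi_intble hc _ _)
  have key1 : (∫ u in (1-a:ℝ)..1, ψ c u) ≤ a * ψ c 1 := by
    have hne : ∀ᵐ (u : ℝ) ∂volume, u ≠ 0 := by
      rw [ae_iff]
      have hset : {u : ℝ | ¬ u ≠ 0} = {0} := by ext u; simp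
      rw [hset]
      exact Real.volume_singleton
    have hmono : ∀ᵐ u ∂(volume.restrict (Set.Icc (1-a:ℝ) 1)), ψ c u ≤ ψ c 1 := by
      filter_upwards [ae_restrict_of_ae hne, ae_restrict_mem measurableSet_Icc] with u hu h2
      have hu0 : 0 < u := lt_of_le_of_ne (by linarith [h2.1]) (Ne.symm hu)
      exact psi_mono hc hu0 h2.2
    calc (∫ u in (1-a:ℝ)..1, ψ c u)
        ≤ ∫ _ in (1-a:ℝ)..1, ψ c 1 :=
          intervalIntegral.integral_mono_ae_restrict (by linarith) (psi_intble hc _ _)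
            intervalIntegrable_const hmono
      _ = a * ψ c 1 := by rw [intervalIntegral.integral_const, smul_eq_mul]; ring
  have key2 : a * ψ c 1 ≤ ∫ u in (1:ℝ)..(1+a), ψ c u := by
    have h3 : (∫ _ in (1:ℝ)..(1+a), ψ c 1) ≤ ∫ u in (1:ℝ)..(1+a), ψ c u := by
      apply intervalIntegral.integral_mono_on (by linarith) intervalIntegrable_const
        (psi_intble hc _ _)
      intro u hu
      exact psi_mono hc one_pos hu.1
    rw [intervalIntegral.integral_const, smul_eq_mul] at h3
    calc a * ψ c 1 = (1 + a - 1) * ψ c 1 := by ring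
      _ ≤ _ := h3
  linarith

lemma convex_ineq {c : ℝ} (hc : 0 < c) {a : ℝ} (h0 : -1 ≤ a) (h1 : a ≤ 1) :
    2 * (∫ u in (0:ℝ)..1, ψ c u)
      ≤ (∫ u in (0:ℝ)..(1+a), ψ c u) + ∫ u in (0:ℝ)..(1-a), ψ c u := by
  rcases le_or_gt 0 a with h | h
  · exact convex_ineq_aux hc h h1
  · have h4 := convex_ineq_aux hc (a := -a) (by linarith) (by linarith)
    rw [show 1 + -a = 1 - a by ring, show 1 - -a = 1 + a by ring] at h4
    linarith

lemma integral_psi_one {c : ℝ} (hc : 0 < c) :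
    (∫ u in (0:ℝ)..1, ψ c u) = c * Real.log c - (c+1) * Real.log (c+1) := by
  set f : ℝ → ℝ :=
    fun u => (u * Real.log u - u) - ((c+u) * Real.log (c+u) - (c+u)) with hf
  have hcont : Continuous f := by
    have h1 : Continuous fun u : ℝ => u * Real.log u := Real.continuous_mul_log
    have h2 : Continuous fun u : ℝ => c + u := continuous_const.add continuous_id
    exact ((h1.sub continuous_id).sub ((h1.comp h2).sub h2))
  have hderiv : ∀ u ∈ Set.Ioo (0:ℝ) 1, HasDerivAt f (ψ c u) u := by
    intro u hu
    have h0 : HasDerivAt (fun v : ℝ => v * Real.log v) (Real.log u + 1) u :=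
      Real.hasDerivAt_mul_log (ne_of_gt hu.1)
    have h1 : HasDerivAt (fun v : ℝ => v * Real.log v - v) (Real.log u) u := by
      exact (h0.sub (hasDerivAt_id u)).congr_deriv (by ring)
    have h2 : HasDerivAt (fun v : ℝ => (c+v) * Real.log (c+v)) (Real.log (c+u) + 1) u := by
      have h2a : HasDerivAt (fun v : ℝ => c + v) 1 u := (hasDerivAt_id u).const_add c
      have := (Real.hasDerivAt_mul_log (x := c + u) (ne_of_gt (add_pos hc hu.1))).comp u h2a
      exact this.congr_deriv (by ring)
    have h3 : HasDerivAt (fun v : ℝ => (c+v) * Real.log (c+v) - (c+v)) (Real.log (c+u)) u := by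
      exact (h2.sub ((hasDerivAt_id u).const_add c)).congr_deriv (by ring)
    have h4 := h1.sub h3
    have h5 : ψ c u = Real.log u - Real.log (c+u) := by
      simp [ψ, abs_of_pos hu.1]
    rw [h5]
    exact h4
  have hta : Filter.Tendsto f (nhdsWithin 0 (Set.Ioi 0)) (nhds (c - c * Real.log c)) := by
    have h6 : Filter.Tendsto f (nhdsWithin 0 (Set.Ioi 0)) (nhds (f 0)) :=
      (hcont.tendsto 0).mono_left nhdsWithin_le_nhds
    convert h6 using 2
    simp [hf]
  have htb : Filter.Tendsto f (nhdsWithin 1 (Set.Iio 1)) (nhds (c - (c+1) * Real.log (c+1))) := by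
    have h6 : Filter.Tendsto f (nhdsWithin 1 (Set.Iio 1)) (nhds (f 1)) :=
      (hcont.tendsto 1).mono_left nhdsWithin_le_nhds
    convert h6 using 2
    simp [hf]
    ring
  have H := intervalIntegral.integral_eq_sub_of_hasDerivAt_of_tendsto
    (by norm_num : (0:ℝ) < 1) hderiv (psi_intble hc 0 1) hta htb
  rw [H]
  ring

end KeyAux

/-- The least even integer that is greater than or equal to `k`. -/
def leastEven (k : ℕ) : ℕ := 2 * ((k + 1) / 2)

open KeyAux Real MeasureTheory Set Filter in
theorem key_integral_lower_bound (N : ℕ) (hN : 1 ≤ N) (δ : ℝ) (hδ : 0 < δ)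
    (n : ℕ) (hn : n ≤ N) (x : Fin n → ℝ) (hxI : ∀ j, x j ∈ Set.Icc (-1:ℝ) 1)
    (k : Fin n → ℕ) (hk : ∀ j, 1 ≤ k j) (hsum : ∑ j, k j = N) :
    let L : ℝ := 1 / 2
    (∫ t in (-1:ℝ)..1,
        ∏ j : Fin n, (L * |t - x j| / (δ + L * |t - x j|)) ^ leastEven (k j))
      ≥ 2 * (((1 + 1 / (2 * δ)) ^ (2 * δ) * (2 * δ + 1)) ^ (2 * N))⁻¹ := by
  intro L
  rw [show L = 1/2 from rfl]
  have hc : (0:ℝ) < 2 * δ := by positivity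
  set μ : Measure ℝ := volume.restrict (Set.Ioc (-1:ℝ) 1) with hμ
  haveI : IsFiniteMeasure μ := ⟨by
    rw [hμ, Measure.restrict_apply_univ, Real.volume_Ioc]
    exact ENNReal.ofReal_lt_top⟩
  haveI : NeZero μ := ⟨by
    rw [← Measure.measure_univ_ne_zero, hμ, Measure.restrict_apply_univ, Real.volume_Ioc]
    norm_num⟩
  have hμuniv : (μ Set.univ).toReal = 2 := by
    rw [hμ, Measure.restrict_apply_univ, Real.volume_Ioc]
    norm_num
  set H : ℝ → ℝ := fun t => ∑ j, (leastEven (k j) : ℝ) * ψ (2*δ) (t - x j) with hH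
  set P : ℝ → ℝ :=
    fun t => ∏ j : Fin n, (1 / 2 * |t - x j| / (δ + 1 / 2 * |t - x j|)) ^ leastEven (k j) with hP
  -- integrability
  have hpsiint : ∀ j, IntegrableOn (fun t => ψ (2*δ) (t - x j)) (Set.Ioc (-1:ℝ) 1) volume := by
    intro j
    have h6 := (psi_intble hc (-1 - x j) (1 - x j)).comp_sub_right (x j)
    rw [show -1 - x j + x j = (-1:ℝ) by ring, show 1 - x j + x j = (1:ℝ) by ring] at h6
    rw [intervalIntegrable_iff, Set.uIoc_of_le (by norm_num : (-1:ℝ) ≤ 1)] at h6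
    exact h6
  have hHint : Integrable H μ := by
    rw [hμ]
    apply MeasureTheory.integrable_finset_sum
    intro j _
    exact ((hpsiint j).const_mul _)
  have hPcont : Continuous P := by
    rw [hP]
    apply continuous_finset_prod
    intro j _
    apply Continuous.pow
    apply Continuous.div
    · exact continuous_const.mul (continuous_id.sub continuous_const).abs
    · exact continuous_const.add (continuous_const.mul (continuous_id.sub continuous_const).abs)
    · intro t
      positivity
  have hPint : Integrable P μ := by
    have h6 := hPcont.intervalIntegrable (μ := volume) (-1:ℝ) 1
    rw [intervalIntegrable_iff, Set.uIoc_of_le (by norm_num : (-1:ℝ) ≤ 1)] at h6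
    rw [hμ]
    exact h6
  -- a.e. equality
  have hae : (fun t => Real.exp (H t)) =ᵐ[μ] P := by
    have hne : ∀ᵐ (t : ℝ) ∂volume, ∀ j, t ≠ x j := by
      rw [ae_iff]
      have hset : {t : ℝ | ¬ ∀ j, t ≠ x j} ⊆ ⋃ j, {x j} := by
        intro t ht
        push_neg at ht
        obtain ⟨j, hj⟩ := ht
        exact Set.mem_iUnion.mpr ⟨j, by simp [hj]⟩
      exact measure_mono_null hset (measure_iUnion_null fun j => Real.volume_singleton)
    rw [hμ]
    refine ae_restrict_of_ae ?_
    filter_upwards [hne] with t ht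
    rw [hH, hP]
    simp only
    rw [Real.exp_sum]
    apply Finset.prod_congr rfl
    intro j _
    have habs : 0 < |t - x j| := abs_pos.mpr (sub_ne_zero.mpr (ht j))
    have hb : (0:ℝ) < 1 / 2 * |t - x j| / (δ + 1 / 2 * |t - x j|) := by positivity
    have hlogb : Real.log (1 / 2 * |t - x j| / (δ + 1 / 2 * |t - x j|))
        = ψ (2*δ) (t - x j) := by
      rw [show (1:ℝ) / 2 * |t - x j| / (δ + 1 / 2 * |t - x j|)
            = |t - x j| / (2*δ + |t - x j|) from by
          rw [div_eq_div_iff (by positivity) (by positivity)]; ring]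
      rw [Real.log_div (ne_of_gt habs) (ne_of_gt (by positivity))]
      rfl
    rw [← hlogb, Real.exp_nat_mul, Real.exp_log hb]
  have hexpint : Integrable (fun t => Real.exp (H t)) μ := hPint.congr hae.symm
  -- Jensen
  have jensen : Real.exp (⨍ t, H t ∂μ) ≤ ⨍ t, Real.exp (H t) ∂μ :=
    convexOn_exp.map_average_le Real.continuous_exp.continuousOn isClosed_univ
      (Filter.Eventually.of_forall fun t => Set.mem_univ _) hHint hexpint
  -- value of inner integrals
  set A : ℝ := ∫ u in (0:ℝ)..1, ψ (2*δ) u with hAdef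
  have hIj : ∀ j, (∫ t, ψ (2*δ) (t - x j) ∂μ) ≥ 2 * A := by
    intro j
    have h7 : (∫ t, ψ (2*δ) (t - x j) ∂μ) = ∫ t in (-1:ℝ)..1, ψ (2*δ) (t - x j) := by
      rw [hμ, intervalIntegral.integral_of_le (by norm_num : (-1:ℝ) ≤ 1)]
    rw [h7, integral_shift hc (x j), hAdef]
    exact convex_ineq hc (hxI j).1 (hxI j).2
  have hA : A ≤ 0 := by
    rw [hAdef, integral_psi_one hc]
    have l1 : Real.log (2*δ) ≤ Real.log (2*δ+1) := Real.log_le_log hc (by linarith)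
    have l2 : 0 ≤ Real.log (2*δ+1) := Real.log_nonneg (by linarith)
    nlinarith
  have hrsum : (∑ j, (leastEven (k j) : ℝ)) ≤ 2 * N := by
    have h8 : ∑ j, leastEven (k j) ≤ 2 * N := by
      calc ∑ j, leastEven (k j) ≤ ∑ j, (k j + 1) :=
            Finset.sum_le_sum fun j _ => by unfold leastEven; omega
        _ = N + n := by rw [Finset.sum_add_distrib, hsum]; simp
        _ ≤ 2 * N := by omega
    calc (∑ j, (leastEven (k j):ℝ)) = ((∑ j, leastEven (k j) : ℕ) : ℝ) := by push_cast; ring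
      _ ≤ ((2*N : ℕ):ℝ) := Nat.cast_le.mpr h8
      _ = 2*(N:ℝ) := by push_cast; ring
  have hHval : (∫ t, H t ∂μ) ≥ (2*(N:ℝ)) * (2 * A) := by
    have h9 : (∫ t, H t ∂μ) = ∑ j, (leastEven (k j):ℝ) * ∫ t, ψ (2*δ) (t - x j) ∂μ := by
      rw [hH]
      rw [MeasureTheory.integral_finset_sum _ (fun j _ => by
        rw [hμ]; exact ((hpsiint j).const_mul _))]
      congr 1
      funext j
      exact MeasureTheory.integral_const_mul _ _
    rw [h9]
    calc ∑ j, (leastEven (k j):ℝ) * ∫ t, ψ (2*δ) (t - x j) ∂μ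
        ≥ ∑ j, (leastEven (k j):ℝ) * (2*A) :=
          Finset.sum_le_sum fun j _ => mul_le_mul_of_nonneg_left (hIj j) (Nat.cast_nonneg _)
      _ = (∑ j, (leastEven (k j):ℝ)) * (2*A) := by rw [← Finset.sum_mul]
      _ ≥ (2*(N:ℝ)) * (2*A) := mul_le_mul_of_nonpos_right hrsum (by linarith)
  -- assemble
  have hfinal : (∫ t in (-1:ℝ)..1, P t) ≥ 2 * Real.exp ((2*(N:ℝ)) * A) := by
    have h10 : (∫ t in (-1:ℝ)..1, P t) = ∫ t, P t ∂μ := by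
      rw [hμ, intervalIntegral.integral_of_le (by norm_num : (-1:ℝ) ≤ 1)]
    have h11 : (⨍ t, Real.exp (H t) ∂μ) = ⨍ t, P t ∂μ := average_congr hae
    have h12 : (⨍ t, P t ∂μ) = (1/2) * ∫ t, P t ∂μ := by
      rw [average_eq, measureReal_def, hμuniv, smul_eq_mul]
      norm_num
    have h13 : (⨍ t, H t ∂μ) = (1/2) * ∫ t, H t ∂μ := by
      rw [average_eq, measureReal_def, hμuniv, smul_eq_mul]
      norm_num
    have h14 : (2*(N:ℝ)) * A ≤ ⨍ t, H t ∂μ := by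
      rw [h13]
      nlinarith [hHval]
    have h15 := Real.exp_le_exp.mpr h14
    have h16 := le_trans h15 jensen
    rw [h11, h12] at h16
    rw [h10]
    linarith
  set C : ℝ := (1 + 1 / (2 * δ)) ^ (2 * δ) * (2 * δ + 1) with hC
  have hCpos : (0:ℝ) < C := by
    rw [hC]
    have := Real.rpow_pos_of_pos (show (0:ℝ) < 1 + 1/(2*δ) by positivity) (2*δ)
    positivity
  have hlogC : Real.log C = -A := by
    rw [hC, hAdef, integral_psi_one hc]
    rw [Real.log_mul (ne_of_gt (Real.rpow_pos_of_pos (by positivity) _)) (by positivity)]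
    rw [Real.log_rpow (by positivity)]
    rw [show (1:ℝ) + 1/(2*δ) = (2*δ+1)/(2*δ) from by field_simp]
    rw [Real.log_div (by positivity) (ne_of_gt hc)]
    ring
  have hexpA : Real.exp ((2*(N:ℝ)) * A) = (C ^ (2 * N))⁻¹ := by
    have hA' : A = - Real.log C := by linarith [hlogC]
    calc Real.exp ((2*(N:ℝ)) * A) = Real.exp (((2*N : ℕ):ℝ) * (- Real.log C)) := by
          rw [hA']; push_cast; ring_nf
      _ = Real.exp (- Real.log C) ^ (2*N) := Real.exp_nat_mul _ _
      _ = (C⁻¹) ^ (2*N) := by rw [Real.exp_neg, Real.exp_log hCpos]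
      _ = (C ^ (2*N))⁻¹ := inv_pow _ _
  rw [← hexpA]
  exact hfinal
end

section
/- Define D(c) := ln(((c²−1+c)/(c²−1))^{(c²−1)/c} · ((c²−1+c)/c)) for c > 1. Then as c → 1⁺, writing Δ = c − 1, one has D(c) = −2Δ·ln Δ + O(Δ); in particular D(c)/(−2(c−1)ln(c−1)) → 1 as c → 1⁺. -/
open Filter Asymptotics

noncomputable def Gfun (c : ℝ) : ℝ :=
  (c+1)/c * (Real.log (c^2-1+c) - Real.log (c+1)) + Real.log (c-1) * ((c-1)/c)

lemma key_id {c : ℝ} (hc : 1 < c) :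
    Real.log (((c ^ 2 - 1 + c) / (c ^ 2 - 1)) ^ ((c ^ 2 - 1) / c)
        * ((c ^ 2 - 1 + c) / c))
    = -2*(c-1)*Real.log (c-1) + (c-1) * Gfun c + Real.log ((c^2-1+c)/c) := by
  have hc0 : 0 < c := by linarith
  have hb : 0 < c^2 - 1 := by nlinarith
  have ha : 0 < c^2 - 1 + c := by linarith
  rw [Real.log_mul (by positivity) (by positivity), Real.log_rpow (by positivity),
    Real.log_div (by positivity) (by positivity),
    show c^2 - 1 = (c-1)*(c+1) by ring,
    Real.log_mul (by linarith) (by linarith)]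
  unfold Gfun
  rw [show (c-1)*(c+1) = c^2-1 by ring]
  field_simp
  ring

theorem decay_rate_asymptotics :
    let D : ℝ → ℝ := fun c =>
      Real.log (((c ^ 2 - 1 + c) / (c ^ 2 - 1)) ^ ((c ^ 2 - 1) / c)
        * ((c ^ 2 - 1 + c) / c))
    (fun c : ℝ => D c - (-2 * (c - 1) * Real.log (c - 1)))
        =O[nhdsWithin 1 (Set.Ioi 1)] (fun c : ℝ => c - 1) ∧
      Tendsto (fun c : ℝ => D c / (-2 * (c - 1) * Real.log (c - 1)))
        (nhdsWithin 1 (Set.Ioi 1)) (nhds 1) := by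
  intro D
  set l : Filter ℝ := nhdsWithin 1 (Set.Ioi 1) with hl
  set E : ℝ → ℝ := fun c => -2 * (c - 1) * Real.log (c - 1) with hE
  have hmem : ∀ᶠ c in l, (1:ℝ) < c := eventually_mem_nhdsWithin
  have hll : l ≤ nhds (1:ℝ) := nhdsWithin_le_nhds
  -- f := log ((c^2-1+c)/c) has derivative 2 at 1 and value 0
  have hg : HasDerivAt (fun c : ℝ => (c^2-1+c)/c) 2 1 := by
    have hnum : HasDerivAt (fun c : ℝ => c^2-1+c) 3 1 := by
      have := (((hasDerivAt_pow 2 (1:ℝ)).sub_const 1).add (hasDerivAt_id 1))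
      norm_num at this
      exact this
    have := hnum.div (hasDerivAt_id 1) one_ne_zero
    norm_num at this
    exact this
  have hf : HasDerivAt (fun c : ℝ => Real.log ((c^2-1+c)/c)) 2 1 := by
    have := hg.log (by norm_num)
    simpa using this
  have hfO : (fun c : ℝ => Real.log ((c^2-1+c)/c)) =O[l] (fun c => c - 1) := by
    have h1 := hf.hasFDerivAt.isBigO_sub
    have h2 : (fun c : ℝ => Real.log ((c^2-1+c)/c) - Real.log ((1^2-1+1)/1))
        =O[nhds 1] (fun c : ℝ => c - 1) := h1
    simp only [show ((1:ℝ)^2-1+1)/1 = 1 by norm_num, Real.log_one, sub_zero] at h2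
    exact h2.mono hll
  -- G tends to -2 log 2
  have hsub : Tendsto (fun c : ℝ => c - 1) l (nhdsWithin 0 (Set.Ioi 0)) := by
    apply tendsto_nhdsWithin_of_tendsto_nhds_of_eventually_within
    · simpa using ((continuous_sub_right (1:ℝ)).tendsto 1).mono_left hll
    · exact hmem.mono fun c hc => by simp [hc, sub_pos]
  have hxlogx : Tendsto (fun x : ℝ => Real.log x * x) (nhdsWithin 0 (Set.Ioi 0)) (nhds 0) := by
    have := tendsto_log_mul_rpow_nhdsGT_zero (r := 1) one_pos
    simpa using this
  have hG2 : Tendsto (fun c : ℝ => Real.log (c-1) * ((c-1)/c)) l (nhds 0) := by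
    have h1 : Tendsto (fun c : ℝ => Real.log (c-1) * (c-1)) l (nhds 0) := hxlogx.comp hsub
    have h2 : Tendsto (fun c : ℝ => c⁻¹) l (nhds 1) := by
      simpa using ((continuous_id.tendsto (1:ℝ)).mono_left hll).inv₀ one_ne_zero
    have := h1.mul h2
    simpa [div_eq_mul_inv, mul_assoc] using this
  have hG1 : Tendsto (fun c : ℝ => (c+1)/c * (Real.log (c^2-1+c) - Real.log (c+1))) l
      (nhds (-2 * Real.log 2)) := by
    have hca : ContinuousAt (fun c : ℝ => (c+1)/c * (Real.log (c^2-1+c) - Real.log (c+1))) 1 := by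
      apply ContinuousAt.mul
      · exact (continuousAt_id.add continuousAt_const).div continuousAt_id one_ne_zero
      · exact ((Real.continuousAt_log (by norm_num)).comp (by fun_prop)).sub
          ((Real.continuousAt_log (by norm_num)).comp (by fun_prop))
    have := hca.tendsto.mono_left hll
    convert this using 2
    norm_num
  have hG : Tendsto Gfun l (nhds (-2 * Real.log 2)) := by
    have := hG1.add hG2
    simp only [add_zero] at this
    exact this
  -- Big-O part
  have hGO : (fun c : ℝ => (c-1) * Gfun c) =O[l] (fun c => c - 1) := by
    have := (isBigO_refl (fun c : ℝ => c - 1) l).mul (hG.isBigO_one ℝ)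
    simpa using this
  have heq : ∀ᶠ c in l, D c - E c = (c-1) * Gfun c + Real.log ((c^2-1+c)/c) :=
    hmem.mono fun c hc => by rw [show D c = _ from key_id hc]; ring
  have hDE : (fun c : ℝ => D c - E c) =O[l] (fun c => c - 1) :=
    (hGO.add hfO).congr' (heq.mono fun _ h => h.symm) (EventuallyEq.refl _ _)
  refine ⟨hDE, ?_⟩
  -- Tendsto part
  have hlogbot : Tendsto (fun c : ℝ => Real.log (c-1)) l atBot :=
    Real.tendsto_log_nhdsGT_zero.comp hsub
  have htop : Tendsto (fun c : ℝ => -2 * Real.log (c-1)) l atTop := by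
    simpa using hlogbot.const_mul_atBot_of_neg (by norm_num : (-2:ℝ) < 0)
  have hinv0 : Tendsto (fun c : ℝ => (-2 * Real.log (c-1))⁻¹) l (nhds 0) :=
    htop.inv_tendsto_atTop
  have hratio : Tendsto (fun c : ℝ => (c-1) * (E c)⁻¹) l (nhds 0) := by
    apply hinv0.congr'
    filter_upwards [hmem] with c hc
    have h1 : c - 1 ≠ 0 := by linarith
    have hd : E c = (c-1) * (-2 * Real.log (c-1)) := by
      show -2 * (c-1) * Real.log (c-1) = _; ring
    conv_rhs => rw [hd, mul_inv, ← mul_assoc, mul_inv_cancel₀ h1, one_mul]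
  have hq : Tendsto (fun c : ℝ => (D c - E c) * (E c)⁻¹) l (nhds 0) :=
    (hDE.mul (isBigO_refl (fun c : ℝ => (E c)⁻¹) l)).trans_tendsto hratio
  have h1q : Tendsto (fun c : ℝ => 1 + (D c - E c) * (E c)⁻¹) l (nhds 1) := by
    simpa using hq.const_add 1
  have hE0 : ∀ᶠ c in l, E c ≠ 0 := by
    have h2 : ∀ᶠ c in l, c < 2 := by
      have : Set.Ioo (1:ℝ) 2 ∈ l := Ioo_mem_nhdsGT_of_mem (by norm_num)
      exact Filter.eventually_of_mem this fun c hc => hc.2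
    filter_upwards [hmem, h2] with c hc hc2
    have h1 : 0 < c - 1 := by linarith
    have h3 : Real.log (c-1) < 0 := Real.log_neg h1 (by linarith)
    have : 0 < E c := by show 0 < -2 * (c-1) * Real.log (c-1); nlinarith
    exact this.ne'
  apply h1q.congr'
  filter_upwards [hE0] with c hc
  rw [sub_mul, mul_inv_cancel₀ hc, div_eq_mul_inv]
  ring
end
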